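/- Let G_Y = (V_Y, E_Y) be a connected finite graph, E_Z ⊆ E_Y, and L an integer with 0 ≤ L ≤ |E_Z|. Let Q be the polytope of vectors y ∈ ℝ^{E_Y} with y ≥ 0 satisfying Σ_{e∈E_Y} y_e = |V_Y| − 1, Σ_{e∈E_Y(U)} y_e ≤ |U| − 1 for every nonempty proper subset U ⊂ V_Y, and Σ_{e∈E_Z} y_e ≥ L. If y is a vertex solution (extreme point) of Q with y_e > 0 for every e ∈ E_Y and E_Y is nonempty, then there exists an edge e' ∈ E_Y with y_{e'} = 1. -/

import Mathlib

open Finset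

/-- The set `E_Y(U)` of edges of `E_Y` having both endpoints in `U`
(edges are given by an endpoint map `p`). -/
def edgesIn {V ε : Type*} [DecidableEq V] (p : ε → V × V)
    (EY : Finset ε) (U : Finset V) : Finset ε :=
  EY.filter fun e => (p e).1 ∈ U ∧ (p e).2 ∈ U

/-- The (multi)graph on vertex set `V` with edge set `E` (endpoints given by `p`)
is connected: every nonempty proper vertex subset is left by some edge. -/
def ConnectedOn {V ε : Type*} [Fintype V] [DecidableEq V]
    (p : ε → V × V) (E : Finset ε) : Prop :=
  ∀ U : Finset V, U.Nonempty → U ≠ Finset.univ →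
    ∃ e ∈ E, ((p e).1 ∈ U ∧ (p e).2 ∉ U) ∨ ((p e).1 ∉ U ∧ (p e).2 ∈ U)

/-- The polytope `Q` of vectors `y ∈ ℝ^{E_Y}` (coordinates outside `E_Y` fixed to `0`)
satisfying the spanning-tree constraints for `G_Y = (V_Y, E_Y)` together with
`∑_{e ∈ E_Z} y_e ≥ L`. -/
def QPolytope {V ε : Type*} [Fintype V] [DecidableEq V]
    (pY : ε → V × V) (EY EZ : Finset ε) (L : ℕ) : Set (ε → ℝ) :=
  {y | (∀ e, 0 ≤ y e) ∧ (∀ e ∉ EY, y e = 0) ∧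
       (∑ e ∈ EY, y e = (Fintype.card V : ℝ) - 1) ∧
       (∀ U : Finset V, U.Nonempty → U ≠ Finset.univ →
         ∑ e ∈ edgesIn pY EY U, y e ≤ (U.card : ℝ) - 1) ∧
       ((L : ℝ) ≤ ∑ e ∈ EZ, y e)}

set_option linter.unusedSectionVars false

section Aux
variable {V ε : Type*} [Fintype V] [DecidableEq V] [DecidableEq ε]

lemma mem_edgesIn (pY : ε → V × V) (EY : Finset ε) (U : Finset V) (e : ε) :
    e ∈ edgesIn pY EY U ↔ e ∈ EY ∧ (pY e).1 ∈ U ∧ (pY e).2 ∈ U := by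
  simp [edgesIn]

lemma edgesIn_subset (pY : ε → V × V) (EY : Finset ε) (U : Finset V) :
    edgesIn pY EY U ⊆ EY := filter_subset _ _

lemma edgesIn_mono (pY : ε → V × V) (EY : Finset ε) {U W : Finset V} (h : U ⊆ W) :
    edgesIn pY EY U ⊆ edgesIn pY EY W := by
  intro e he; simp only [edgesIn, mem_filter] at *
  exact ⟨he.1, h he.2.1, h he.2.2⟩

lemma edgesIn_inter (pY : ε → V × V) (EY : Finset ε) (U W : Finset V) :
    edgesIn pY EY U ∩ edgesIn pY EY W = edgesIn pY EY (U ∩ W) := by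
  ext e; simp only [edgesIn, mem_inter, mem_filter]; tauto

lemma edgesIn_univ (pY : ε → V × V) (EY : Finset ε) :
    edgesIn pY EY (univ : Finset V) = EY := by simp [edgesIn]

lemma edgesIn_card_le_one (pY : ε → V × V) (EY : Finset ε)
    (hnl : ∀ e ∈ EY, (pY e).1 ≠ (pY e).2) {U : Finset V} (hU : U.card ≤ 1) :
    edgesIn pY EY U = ∅ := by
  rw [eq_empty_iff_forall_notMem]
  intro e he
  simp only [edgesIn, mem_filter] at he
  exact hnl e he.1 (Finset.card_le_one.mp hU _ he.2.1 _ he.2.2)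

lemma exists_ne_zero_in_ker (A : Finset ε) (k : ℕ) (hk : k < A.card) (f : Fin k → ε → ℝ) :
    ∃ z : ε → ℝ, z ≠ 0 ∧ (∀ e, z e ≠ 0 → e ∈ A) ∧ ∀ i, ∑ e ∈ A, f i e * z e = 0 := by
  classical
  let g : (A → ℝ) →ₗ[ℝ] (Fin k → ℝ) :=
    { toFun := fun w i => ∑ a : A, f i a * w a
      map_add' := by
        intro w1 w2; funext i
        simp [mul_add, Finset.sum_add_distrib]
      map_smul' := by
        intro c w; funext i
        simp only [Pi.smul_apply, smul_eq_mul, RingHom.id_apply]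
        rw [Finset.mul_sum]
        exact Finset.sum_congr rfl fun a _ => by ring }
  have hni : ¬ Function.Injective g := by
    intro hinj
    have := LinearMap.finrank_le_finrank_of_injective hinj
    simp only [Module.finrank_pi, Fintype.card_coe, Fintype.card_fin] at this
    omega
  rw [← LinearMap.ker_eq_bot] at hni
  obtain ⟨w, hw, hwne⟩ := Submodule.exists_mem_ne_zero_of_ne_bot hni
  refine ⟨fun e => if h : e ∈ A then w ⟨e, h⟩ else 0, ?_, ?_, ?_⟩
  · intro hz
    apply hwne
    funext a
    have := congrFun hz a
    simpa [a.2] using this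
  · intro e he
    by_contra h
    simp [h] at he
  · intro i
    have hker : g w i = 0 := by rw [LinearMap.mem_ker] at hw; rw [hw]; rfl
    rw [← Finset.sum_attach A]
    rw [← hker]
    simp only [g, LinearMap.coe_mk, AddHom.coe_mk]
    exact Finset.sum_congr rfl fun a _ => by simp [a.2]

/-- tightness of a vertex set for the subtour constraints -/
def TightSet (pY : ε → V × V) (EY : Finset ε) (y : ε → ℝ) (U : Finset V) : Prop :=
  U.Nonempty ∧ ∑ e ∈ edgesIn pY EY U, y e = (U.card : ℝ) - 1

lemma tight_inter (pY : ε → V × V) (EY : Finset ε) (y : ε → ℝ)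
    (hpos : ∀ e, 0 ≤ y e)
    (hsub : ∀ U : Finset V, U.Nonempty → ∑ e ∈ edgesIn pY EY U, y e ≤ (U.card : ℝ) - 1)
    {A B : Finset V} (hA : TightSet pY EY y A) (hB : TightSet pY EY y B)
    (hne : (A ∩ B).Nonempty) : TightSet pY EY y (A ∩ B) := by
  obtain ⟨hAne, hAt⟩ := hA
  obtain ⟨hBne, hBt⟩ := hB
  refine ⟨hne, ?_⟩
  have h1 : ∑ e ∈ edgesIn pY EY A ∪ edgesIn pY EY B, y e
      + ∑ e ∈ edgesIn pY EY A ∩ edgesIn pY EY B, y e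
      = ∑ e ∈ edgesIn pY EY A, y e + ∑ e ∈ edgesIn pY EY B, y e :=
    Finset.sum_union_inter
  have h2 : ∑ e ∈ edgesIn pY EY A ∪ edgesIn pY EY B, y e
      ≤ ∑ e ∈ edgesIn pY EY (A ∪ B), y e := by
    apply Finset.sum_le_sum_of_subset_of_nonneg
    · intro e he
      rcases mem_union.mp he with h | h
      · exact edgesIn_mono pY EY subset_union_left h
      · exact edgesIn_mono pY EY subset_union_right h
    · intro e _ _; exact hpos e
  rw [edgesIn_inter] at h1
  have h3 := hsub (A ∪ B) (hAne.mono subset_union_left)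
  have h4 := hsub (A ∩ B) hne
  have h5 : ((A ∪ B).card : ℝ) + ((A ∩ B).card : ℝ) = (A.card : ℝ) + (B.card : ℝ) := by
    exact_mod_cast congrArg (Nat.cast (R := ℝ)) (card_union_add_card_inter A B)
  linarith

end Aux

section Pert
variable {V ε : Type*} [Fintype V] [DecidableEq V] [DecidableEq ε] [Nonempty V]

set_option maxHeartbeats 1000000 in
lemma not_extreme_of_direction
    (pY : ε → V × V) (EY EZ : Finset ε) (L : ℕ)
    (y z : ε → ℝ) (hyQ : y ∈ QPolytope pY EY EZ L)
    (hzne : z ≠ 0)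
    (hsupp : ∀ e, z e ≠ 0 → e ∈ EY)
    (hypos : ∀ e ∈ EY, 0 < y e)
    (htight : ∀ U : Finset V, U.Nonempty →
      ∑ e ∈ edgesIn pY EY U, y e = (U.card : ℝ) - 1 →
      ∑ e ∈ edgesIn pY EY U, z e = 0)
    (hzEZ : ∑ e ∈ EZ, y e = (L : ℝ) → ∑ e ∈ EZ, z e = 0) :
    y ∉ Set.extremePoints ℝ (QPolytope pY EY EZ L) := by
  classical
  obtain ⟨hpos, hout, hsum, hsubt, hEZc⟩ := hyQ
  set c1 : ε → ℝ := fun e => if z e = 0 then 1 else y e / |z e| with hc1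
  set c2 : Finset V → ℝ := fun U =>
    if (∑ e ∈ edgesIn pY EY U, z e) = 0 ∨ ((U.card : ℝ) - 1 - ∑ e ∈ edgesIn pY EY U, y e) ≤ 0
    then 1
    else ((U.card : ℝ) - 1 - ∑ e ∈ edgesIn pY EY U, y e) / |∑ e ∈ edgesIn pY EY U, z e|
    with hc2
  set c3 : ℝ :=
    if (∑ e ∈ EZ, z e) = 0 ∨ (∑ e ∈ EZ, y e - (L : ℝ)) ≤ 0 then 1
    else (∑ e ∈ EZ, y e - (L : ℝ)) / |∑ e ∈ EZ, z e| with hc3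
  set B : Finset ℝ :=
    insert 1 (insert c3 (EY.image c1 ∪ (univ : Finset (Finset V)).image c2)) with hB
  have hBne : B.Nonempty := ⟨1, mem_insert_self _ _⟩
  set ε0 := B.min' hBne with hε0
  have hε0pos : 0 < ε0 := by
    have hmem := B.min'_mem hBne
    rw [← hε0] at hmem
    rw [hB] at hmem
    simp only [mem_insert, mem_union, mem_image] at hmem
    rcases hmem with h | h | ⟨e, he, h⟩ | ⟨U, _, h⟩
    · rw [h]; norm_num
    · rw [h, hc3]
      split_ifs with hi
      · norm_num
      · push_neg at hi
        exact div_pos hi.2 (abs_pos.mpr hi.1)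
    · rw [← h, hc1]
      dsimp only
      split_ifs with hi
      · norm_num
      · exact div_pos (hypos e he) (abs_pos.mpr hi)
    · rw [← h, hc2]
      dsimp only
      split_ifs with hi
      · norm_num
      · push_neg at hi
        exact div_pos hi.2 (abs_pos.mpr hi.1)
  have hb1 : ∀ e ∈ EY, ε0 * |z e| ≤ y e := by
    intro e he
    by_cases hz : z e = 0
    · rw [hz]; simp [le_of_lt (hypos e he)]
    · have hmem : c1 e ∈ B := by
        rw [hB]; simp only [mem_insert, mem_union, mem_image]
        exact Or.inr (Or.inr (Or.inl ⟨e, he, rfl⟩))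
      have hle : ε0 ≤ c1 e := B.min'_le _ hmem
      rw [hc1] at hle
      simp only [hz, if_false] at hle
      have habs : (0:ℝ) < |z e| := abs_pos.mpr hz
      calc ε0 * |z e| ≤ (y e / |z e|) * |z e| := by
            apply mul_le_mul_of_nonneg_right hle (le_of_lt habs)
        _ = y e := div_mul_cancel₀ _ (ne_of_gt habs)
  have hb2 : ∀ U : Finset V, (∑ e ∈ edgesIn pY EY U, z e) ≠ 0 →
      0 < (U.card : ℝ) - 1 - ∑ e ∈ edgesIn pY EY U, y e →
      ε0 * |∑ e ∈ edgesIn pY EY U, z e| ≤ (U.card : ℝ) - 1 - ∑ e ∈ edgesIn pY EY U, y e := by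
    intro U hz hs
    have hmem : c2 U ∈ B := by
      rw [hB]; simp only [mem_insert, mem_union, mem_image]
      exact Or.inr (Or.inr (Or.inr ⟨U, mem_univ U, rfl⟩))
    have hle : ε0 ≤ c2 U := B.min'_le _ hmem
    rw [hc2] at hle
    dsimp only at hle
    rw [if_neg (by push_neg; exact ⟨hz, hs⟩)] at hle
    have habs : (0:ℝ) < |∑ e ∈ edgesIn pY EY U, z e| := abs_pos.mpr hz
    calc ε0 * |∑ e ∈ edgesIn pY EY U, z e|
        ≤ (((U.card : ℝ) - 1 - ∑ e ∈ edgesIn pY EY U, y e) / |∑ e ∈ edgesIn pY EY U, z e|)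
            * |∑ e ∈ edgesIn pY EY U, z e| := mul_le_mul_of_nonneg_right hle (le_of_lt habs)
      _ = (U.card : ℝ) - 1 - ∑ e ∈ edgesIn pY EY U, y e := div_mul_cancel₀ _ (ne_of_gt habs)
  have hb3 : (∑ e ∈ EZ, z e) ≠ 0 → 0 < ∑ e ∈ EZ, y e - (L : ℝ) →
      ε0 * |∑ e ∈ EZ, z e| ≤ ∑ e ∈ EZ, y e - (L : ℝ) := by
    intro hz hs
    have hmem : c3 ∈ B := by rw [hB]; simp
    have hle : ε0 ≤ c3 := B.min'_le _ hmem
    rw [hc3, if_neg (by push_neg; exact ⟨hz, hs⟩)] at hle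
    have habs : (0:ℝ) < |∑ e ∈ EZ, z e| := abs_pos.mpr hz
    calc ε0 * |∑ e ∈ EZ, z e|
        ≤ ((∑ e ∈ EZ, y e - (L : ℝ)) / |∑ e ∈ EZ, z e|) * |∑ e ∈ EZ, z e| :=
          mul_le_mul_of_nonneg_right hle (le_of_lt habs)
      _ = ∑ e ∈ EZ, y e - (L : ℝ) := div_mul_cancel₀ _ (ne_of_gt habs)
  have hzEY : ∑ e ∈ EY, z e = 0 := by
    have := htight univ univ_nonempty (by rw [edgesIn_univ, hsum, card_univ])
    rwa [edgesIn_univ] at this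
  have hclaim : ∀ c : ℝ, |c| ≤ ε0 → (fun e => y e + c * z e) ∈ QPolytope pY EY EZ L := by
    intro c hc
    refine ⟨?_, ?_, ?_, ?_, ?_⟩
    · intro e
      dsimp only
      by_cases hz : z e = 0
      · simp [hz, hpos e]
      · have he := hsupp e hz
        have h1 : |c * z e| ≤ ε0 * |z e| := by
          rw [abs_mul]
          exact mul_le_mul_of_nonneg_right hc (abs_nonneg _)
        have h2 := hb1 e he
        have h3 : -(c * z e) ≤ |c * z e| := neg_le_abs _
        linarith
    · intro e he
      have hz : z e = 0 := by
        by_contra h; exact he (hsupp e h)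
      dsimp only
      rw [hz, hout e he]; ring
    · have : ∑ e ∈ EY, (y e + c * z e) = ∑ e ∈ EY, y e + c * ∑ e ∈ EY, z e := by
        rw [Finset.sum_add_distrib, Finset.mul_sum]
      rw [this, hzEY, hsum]; ring
    · intro U hUne hUprop
      have hsplit : ∑ e ∈ edgesIn pY EY U, (y e + c * z e)
          = ∑ e ∈ edgesIn pY EY U, y e + c * ∑ e ∈ edgesIn pY EY U, z e := by
        rw [Finset.sum_add_distrib, Finset.mul_sum]
      rw [hsplit]
      by_cases ht : ∑ e ∈ edgesIn pY EY U, y e = (U.card : ℝ) - 1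
      · rw [htight U hUne ht, ht]; simp
      · have hlt : ∑ e ∈ edgesIn pY EY U, y e < (U.card : ℝ) - 1 :=
          lt_of_le_of_ne (hsubt U hUne hUprop) ht
        by_cases hz : ∑ e ∈ edgesIn pY EY U, z e = 0
        · rw [hz]; linarith
        · have h1 : c * ∑ e ∈ edgesIn pY EY U, z e ≤ |c * ∑ e ∈ edgesIn pY EY U, z e| :=
            le_abs_self _
          have h2 : |c * ∑ e ∈ edgesIn pY EY U, z e| ≤ ε0 * |∑ e ∈ edgesIn pY EY U, z e| := by
            rw [abs_mul]; exact mul_le_mul_of_nonneg_right hc (abs_nonneg _)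
          have h3 := hb2 U hz (by linarith)
          linarith
    · have hsplit : ∑ e ∈ EZ, (y e + c * z e) = ∑ e ∈ EZ, y e + c * ∑ e ∈ EZ, z e := by
        rw [Finset.sum_add_distrib, Finset.mul_sum]
      rw [hsplit]
      by_cases ht : ∑ e ∈ EZ, y e = (L : ℝ)
      · rw [hzEZ ht, ht]; simp
      · have hlt : (L : ℝ) < ∑ e ∈ EZ, y e := lt_of_le_of_ne hEZc (fun h => ht h.symm)
        by_cases hz : ∑ e ∈ EZ, z e = 0
        · rw [hz]; linarith
        · have h1 : -(c * ∑ e ∈ EZ, z e) ≤ |c * ∑ e ∈ EZ, z e| := neg_le_abs _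
          have h2 : |c * ∑ e ∈ EZ, z e| ≤ ε0 * |∑ e ∈ EZ, z e| := by
            rw [abs_mul]; exact mul_le_mul_of_nonneg_right hc (abs_nonneg _)
          have h3 := hb3 hz (by linarith)
          linarith
  intro hext
  rw [mem_extremePoints] at hext
  have ha := hclaim ε0 (by rw [abs_of_pos hε0pos])
  have hbmem := hclaim (-ε0) (by rw [abs_neg, abs_of_pos hε0pos])
  have hseg : y ∈ openSegment ℝ (fun e => y e + ε0 * z e) (fun e => y e + (-ε0) * z e) := by
    refine ⟨1/2, 1/2, by norm_num, by norm_num, by norm_num, ?_⟩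
    funext e
    simp only [Pi.add_apply, Pi.smul_apply, smul_eq_mul]
    ring
  obtain ⟨h1, _⟩ := hext.2 _ ha _ hbmem hseg
  apply hzne
  funext e
  have := congrFun h1 e
  have : ε0 * z e = 0 := by linarith [congrFun h1 e]
  have := mul_eq_zero.mp this
  rcases this with h | h
  · exact absurd h (ne_of_gt hε0pos)
  · exact h


end Pert


set_option maxHeartbeats 1600000 in
/-- If `y` is a vertex solution of `Q` with `y_e > 0` for every
`e ∈ E_Y` and `E_Y` is nonempty, then some `y_{e'} = 1` for an edge `e' ∈ E_Y`. -/
theorem vertex_of_Q_has_integral_coordinate {V ε : Type*}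
    [Fintype V] [DecidableEq V] [DecidableEq ε] [Nonempty V]
    (pY : ε → V × V) (EY EZ : Finset ε) (L : ℕ)
    (hconn : ConnectedOn pY EY)
    (hEZ : EZ ⊆ EY) (hL : L ≤ EZ.card)
    (hEYne : EY.Nonempty)
    (y : ε → ℝ)
    (hvert : y ∈ Set.extremePoints ℝ (QPolytope pY EY EZ L))
    (hy : ∀ e ∈ EY, 0 < y e) :
    ∃ e' ∈ EY, y e' = 1 := by
  classical
  by_contra hno
  push_neg at hno
  obtain ⟨hpos, hout, hsum, hsubt, hEZc⟩ := hvert.1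
  -- |V| ≥ 2
  have h2 : 2 ≤ Fintype.card V := by
    by_contra h
    push_neg at h
    have h1 : Fintype.card V = 1 := by
      have := Fintype.card_pos (α := V); omega
    obtain ⟨e0, he0⟩ := hEYne
    have hle : y e0 ≤ ∑ e ∈ EY, y e := single_le_sum (fun i _ => hpos i) he0
    rw [hsum, h1] at hle
    have := hy e0 he0
    norm_num at hle
    linarith
  -- uniform subtour bound (including U = univ)
  have hsub : ∀ U : Finset V, U.Nonempty →
      ∑ e ∈ edgesIn pY EY U, y e ≤ (U.card : ℝ) - 1 := by
    intro U hU
    by_cases hUu : U = univ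
    · subst hUu
      rw [edgesIn_univ, hsum, card_univ]
    · exact hsubt U hU hUu
  -- univ is tight
  have htuniv : TightSet pY EY y (univ : Finset V) := by
    refine ⟨univ_nonempty, ?_⟩
    rw [edgesIn_univ, hsum, card_univ]
  -- no loops
  have hnoloop : ∀ e ∈ EY, (pY e).1 ≠ (pY e).2 := by
    intro e he heq
    have hvmem : e ∈ edgesIn pY EY {(pY e).1} := by
      rw [mem_edgesIn]
      exact ⟨he, mem_singleton_self _, by rw [mem_singleton]; exact heq.symm⟩
    have hge : y e ≤ ∑ e' ∈ edgesIn pY EY {(pY e).1}, y e' :=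
      single_le_sum (fun i _ => hpos i) hvmem
    have hle := hsub _ (singleton_nonempty (pY e).1)
    rw [card_singleton] at hle
    have := hy e he
    norm_num at hle
    linarith
  -- all coordinates strictly below 1
  have hfrac : ∀ e ∈ EY, y e < 1 := by
    intro e he
    have hne12 := hnoloop e he
    have hcard : ({(pY e).1, (pY e).2} : Finset V).card = 2 := card_pair hne12
    have hmem : e ∈ edgesIn pY EY {(pY e).1, (pY e).2} := by
      rw [mem_edgesIn]
      exact ⟨he, mem_insert_self _ _, by simp⟩
    have h1 : y e ≤ ∑ e' ∈ edgesIn pY EY {(pY e).1, (pY e).2}, y e' :=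
      single_le_sum (fun i _ => hpos i) hmem
    have hle := hsub {(pY e).1, (pY e).2} ⟨(pY e).1, mem_insert_self _ _⟩
    rw [hcard] at hle
    have hy1 : y e ≤ 1 := by norm_num at hle; linarith
    exact lt_of_le_of_ne hy1 (hno e he)
  -- tight sets with ≥ 2 vertices have ≥ (their size) many edges
  have hEcard : ∀ U : Finset V, TightSet pY EY y U → 2 ≤ U.card →
      U.card ≤ (edgesIn pY EY U).card := by
    intro U hUT h2U
    obtain ⟨hUne, hUt⟩ := hUT
    have hc2 : (2:ℝ) ≤ (U.card : ℝ) := by exact_mod_cast h2U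
    have hEne : (edgesIn pY EY U).Nonempty := by
      rw [nonempty_iff_ne_empty]
      intro h
      rw [h, Finset.sum_empty] at hUt
      linarith
    have hlt : ∑ e ∈ edgesIn pY EY U, y e < ((edgesIn pY EY U).card : ℝ) := by
      calc ∑ e ∈ edgesIn pY EY U, y e
          < ∑ _e ∈ edgesIn pY EY U, (1:ℝ) :=
            sum_lt_sum_of_nonempty hEne (fun e he => hfrac e (edgesIn_subset pY EY U he))
        _ = ((edgesIn pY EY U).card : ℝ) := by rw [Finset.sum_const, nsmul_eq_mul, mul_one]
    rw [hUt] at hlt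
    have : U.card < (edgesIn pY EY U).card + 1 := by exact_mod_cast (by linarith :
      (U.card : ℝ) < ((edgesIn pY EY U).card : ℝ) + 1)
    omega
  -- family of tight sets of size ≥ 2
  set F : Finset (Finset V) :=
    (univ : Finset (Finset V)).filter (fun U => TightSet pY EY y U ∧ 2 ≤ U.card) with hF
  have hunivF : (univ : Finset V) ∈ F := by
    rw [hF, mem_filter]
    exact ⟨mem_univ _, htuniv, by rw [card_univ]; exact h2⟩
  obtain ⟨S, hSF, hSmin⟩ := F.exists_minimal ⟨univ, hunivF⟩
  replace hSmin : ∀ X ∈ F, ¬ X < S := fun X hX hlt => hlt.ne (le_antisymm hlt.le (hSmin hX hlt.le))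
  have hST : TightSet pY EY y S := ((mem_filter.mp hSF).2).1
  have hS2 : 2 ≤ S.card := ((mem_filter.mp hSF).2).2
  -- classification of tight sets against a minimal tight set
  have hminclass : ∀ S₀, S₀ ∈ F → (∀ X ∈ F, ¬ X < S₀) → ∀ U, TightSet pY EY y U →
      (U ∩ S₀).card ≤ 1 ∨ S₀ ⊆ U := by
    intro S₀ hS₀F hS₀min U hU
    by_cases hne : (U ∩ S₀).Nonempty
    · have hTcap := tight_inter pY EY y hpos hsub hU ((mem_filter.mp hS₀F).2).1 hne
      by_cases hc : 2 ≤ (U ∩ S₀).card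
      · have hmemF : U ∩ S₀ ∈ F := by rw [hF, mem_filter]; exact ⟨mem_univ _, hTcap, hc⟩
        have hsub' : U ∩ S₀ ⊆ S₀ := inter_subset_right
        have heq : U ∩ S₀ = S₀ := by
          by_contra hne'
          exact hS₀min _ hmemF (lt_iff_ssubset.mpr (Finset.ssubset_iff_subset_ne.mpr ⟨hsub', hne'⟩))
        right
        rw [← heq]
        exact inter_subset_left
      · left; omega
    · rw [not_nonempty_iff_eq_empty] at hne
      left; rw [hne]; simp
  -- sums of functions with restricted support
  have hsumsupp : ∀ (z : ε → ℝ) (A : Finset ε), (∀ e, z e ≠ 0 → e ∈ A) →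
      ∀ (C : Finset ε), ∑ e ∈ C, z e = ∑ e ∈ C ∩ A, z e := by
    intro z A hz C
    symm
    apply Finset.sum_subset inter_subset_left
    intro x hx hnx
    by_contra h
    exact hnx (mem_inter.mpr ⟨hx, hz x h⟩)
  -- the direction property for a minimal tight set
  have hdir : ∀ S₀, S₀ ∈ F → (∀ X ∈ F, ¬ X < S₀) → ∀ z : ε → ℝ,
      (∀ e, z e ≠ 0 → e ∈ edgesIn pY EY S₀) → ∑ e ∈ edgesIn pY EY S₀, z e = 0 →
      ∀ U : Finset V, U.Nonempty → ∑ e ∈ edgesIn pY EY U, y e = (U.card : ℝ) - 1 →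
      ∑ e ∈ edgesIn pY EY U, z e = 0 := by
    intro S₀ h1 h2' z hz hzsum U hUne hUt
    rw [hsumsupp z _ hz (edgesIn pY EY U)]
    rcases hminclass S₀ h1 h2' U ⟨hUne, hUt⟩ with h | h
    · rw [edgesIn_inter, edgesIn_card_le_one pY EY hnoloop h, Finset.sum_empty]
    · rw [inter_eq_right.mpr (edgesIn_mono pY EY h)]
      exact hzsum
  -- applying the perturbation lemma
  have hcontra : ∀ z : ε → ℝ, z ≠ 0 → (∀ e, z e ≠ 0 → e ∈ EY) →
      (∀ U : Finset V, U.Nonempty → ∑ e ∈ edgesIn pY EY U, y e = (U.card : ℝ) - 1 →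
        ∑ e ∈ edgesIn pY EY U, z e = 0) →
      ((∑ e ∈ EZ, y e = (L : ℝ)) → ∑ e ∈ EZ, z e = 0) → False := by
    intro z h0 h1 h2' h3
    exact not_extreme_of_direction pY EY EZ L y z hvert.1 h0 h1 hy h2' h3 hvert
  -- translation of ite sums
  have hitesum : ∀ (z : ε → ℝ) (A C : Finset ε),
      ∑ e ∈ A, (if e ∈ C then (1:ℝ) else 0) * z e = ∑ e ∈ A ∩ C, z e := by
    intro z A C
    rw [← Finset.filter_mem_eq_inter, Finset.sum_filter]
    exact Finset.sum_congr rfl fun e _ => by split_ifs <;> simp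
  have hScard : 2 ≤ (edgesIn pY EY S).card := le_trans hS2 (hEcard S hST hS2)
  by_cases hEZt : ∑ e ∈ EZ, y e = (L : ℝ)
  · -- the EZ constraint is tight
    by_cases hbad : ∀ S₀ ∈ F, (∀ X ∈ F, ¬ X < S₀) →
        (edgesIn pY EY S₀).card = 2 ∧ (EZ ∩ edgesIn pY EY S₀).card = 1
    · -- every minimal tight set is "bad"
      obtain ⟨hSE2, hSEZ1⟩ := hbad S hSF hSmin
      by_cases huniq : ∀ S' ∈ F, (∀ X ∈ F, ¬ X < S') → S' = S
      · -- S is the unique minimal tight set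
        by_cases hSuniv : S = univ
        · -- then EY has two edges, exactly one in EZ: direct contradiction
          rw [hSuniv, edgesIn_univ] at hSEZ1
          rw [inter_eq_left.mpr hEZ] at hSEZ1
          obtain ⟨a, ha⟩ := card_eq_one.mp hSEZ1
          have haEZ : a ∈ EZ := by rw [ha]; exact mem_singleton_self a
          have haEY : a ∈ EY := hEZ haEZ
          have hsumEZ : ∑ e ∈ EZ, y e = y a := by rw [ha, sum_singleton]
          rw [hsumEZ] at hEZt
          rcases Nat.eq_zero_or_pos L with h | h
          · rw [h] at hEZt; norm_num at hEZt
            linarith [hy a haEY]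
          · have : (1:ℝ) ≤ (L:ℝ) := by exact_mod_cast h
            linarith [hfrac a haEY]
        · -- S is proper: take the minimal tight set S₂ strictly containing S
          set F2 : Finset (Finset V) :=
            (univ : Finset (Finset V)).filter (fun U => TightSet pY EY y U ∧ S ⊂ U) with hF2
          have hunivF2 : (univ : Finset V) ∈ F2 := by
            rw [hF2, mem_filter]
            exact ⟨mem_univ _, htuniv, ssubset_univ_iff.mpr hSuniv⟩
          obtain ⟨S₂, hS₂F2, hS₂min⟩ := F2.exists_minimal ⟨univ, hunivF2⟩
          replace hS₂min : ∀ X ∈ F2, ¬ X < S₂ := fun X hX hlt => hlt.ne (le_antisymm hlt.le (hS₂min hX hlt.le))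
          have hS₂T : TightSet pY EY y S₂ := ((mem_filter.mp hS₂F2).2).1
          have hSS₂ : S ⊂ S₂ := ((mem_filter.mp hS₂F2).2).2
          -- the only tight subsets of S₂ of size ≥ 2 are S and S₂
          have hsubclass : ∀ W, TightSet pY EY y W → W ⊆ S₂ →
              W.card ≤ 1 ∨ W = S ∨ W = S₂ := by
            intro W hWT hWS₂
            by_cases hc : 2 ≤ W.card
            · right
              have hWF : W ∈ F := by rw [hF, mem_filter]; exact ⟨mem_univ _, hWT, hc⟩
              obtain ⟨X, hXmem, hXmin⟩ :=
                (F.filter (· ⊆ W)).exists_minimal ⟨W, mem_filter.mpr ⟨hWF, subset_rfl⟩⟩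
              replace hXmin : ∀ Y ∈ F.filter (· ⊆ W), ¬ Y < X := fun Y hY hlt => hlt.ne (le_antisymm hlt.le (hXmin hY hlt.le))
              have hXF : X ∈ F := (mem_filter.mp hXmem).1
              have hXW : X ⊆ W := (mem_filter.mp hXmem).2
              have hXminF : ∀ Y ∈ F, ¬ Y < X := by
                intro Y hY hYX
                exact hXmin Y (mem_filter.mpr ⟨hY, (le_of_lt hYX).trans hXW⟩) hYX
              have hXS : X = S := huniq X hXF hXminF
              have hSW : S ⊆ W := hXS ▸ hXW
              by_cases hWS : W = S
              · exact Or.inl hWS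
              · right
                have hSsW : S ⊂ W := Finset.ssubset_iff_subset_ne.mpr ⟨hSW, fun h => hWS h.symm⟩
                have hWF2 : W ∈ F2 := by rw [hF2, mem_filter]; exact ⟨mem_univ _, hWT, hSsW⟩
                by_contra hne
                exact hS₂min W hWF2 (lt_iff_ssubset.mpr (Finset.ssubset_iff_subset_ne.mpr ⟨hWS₂, hne⟩))
            · left; omega
          have hESS₂ : edgesIn pY EY S ⊆ edgesIn pY EY S₂ := edgesIn_mono pY EY hSS₂.subset
          -- E(S₂) has at least 4 edges
          have hcard4 : 4 ≤ (edgesIn pY EY S₂).card := by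
            set D := edgesIn pY EY S₂ \ edgesIn pY EY S with hD
            have hsumD : ∑ e ∈ D, y e = (S₂.card : ℝ) - (S.card : ℝ) := by
              rw [hD, Finset.sum_sdiff_eq_sub hESS₂, hS₂T.2, hST.2]
              ring
            have hk : S.card < S₂.card := card_lt_card hSS₂
            have h1k : (1:ℝ) ≤ (S₂.card : ℝ) - (S.card : ℝ) := by
              have : (S.card : ℝ) + 1 ≤ (S₂.card : ℝ) := by exact_mod_cast hk
              linarith
            have hDne : D.Nonempty := by
              rw [nonempty_iff_ne_empty]
              intro h
              rw [h, Finset.sum_empty] at hsumD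
              linarith
            have hDsub : D ⊆ EY := fun e he =>
              edgesIn_subset pY EY S₂ ((sdiff_subset) he)
            have hlt : ∑ e ∈ D, y e < (D.card : ℝ) := by
              calc ∑ e ∈ D, y e < ∑ _e ∈ D, (1:ℝ) :=
                  sum_lt_sum_of_nonempty hDne (fun e he => hfrac e (hDsub he))
                _ = (D.card : ℝ) := by rw [Finset.sum_const, nsmul_eq_mul, mul_one]
            have hD2 : 2 ≤ D.card := by
              have : (1:ℝ) < (D.card : ℝ) := by rw [hsumD] at hlt; linarith
              exact_mod_cast (by exact_mod_cast this : (1:ℕ) < D.card)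
            have hsplit : D.card + (edgesIn pY EY S).card = (edgesIn pY EY S₂).card :=
              Finset.card_sdiff_add_card_eq_card hESS₂
            omega
          -- direction z supported in E(S₂)
          obtain ⟨z, hz0, hzsupp, hzker⟩ := exists_ne_zero_in_ker (edgesIn pY EY S₂) 3
            (by omega)
            ![fun _ => 1, fun e => if e ∈ edgesIn pY EY S then (1:ℝ) else 0,
              fun e => if e ∈ EZ then (1:ℝ) else 0]
          have hk0 : ∑ e ∈ edgesIn pY EY S₂, z e = 0 := by
            have := hzker 0
            simpa using this
          have hk1 : ∑ e ∈ edgesIn pY EY S, z e = 0 := by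
            have := hzker 1
            rw [show (![fun _ => (1:ℝ), fun e => if e ∈ edgesIn pY EY S then (1:ℝ) else 0,
              fun e => if e ∈ EZ then (1:ℝ) else 0] : Fin 3 → ε → ℝ) 1
              = fun e => if e ∈ edgesIn pY EY S then (1:ℝ) else 0 from rfl] at this
            rw [hitesum z _ _] at this
            rwa [inter_eq_right.mpr hESS₂] at this
          have hk2 : ∑ e ∈ EZ, z e = 0 := by
            have := hzker 2
            rw [show (![fun _ => (1:ℝ), fun e => if e ∈ edgesIn pY EY S then (1:ℝ) else 0,
              fun e => if e ∈ EZ then (1:ℝ) else 0] : Fin 3 → ε → ℝ) 2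
              = fun e => if e ∈ EZ then (1:ℝ) else 0 from rfl] at this
            rw [hitesum z _ _] at this
            rw [hsumsupp z _ hzsupp EZ, inter_comm]
            exact this
          have htight : ∀ U : Finset V, U.Nonempty →
              ∑ e ∈ edgesIn pY EY U, y e = (U.card : ℝ) - 1 →
              ∑ e ∈ edgesIn pY EY U, z e = 0 := by
            intro U hUne hUt
            rw [hsumsupp z _ hzsupp (edgesIn pY EY U), edgesIn_inter]
            by_cases hne : (U ∩ S₂).Nonempty
            · have hWt := tight_inter pY EY y hpos hsub ⟨hUne, hUt⟩ hS₂T hne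
              rcases hsubclass _ hWt inter_subset_right with h | h | h
              · rw [edgesIn_card_le_one pY EY hnoloop h, Finset.sum_empty]
              · rw [h]; exact hk1
              · rw [h]; exact hk0
            · rw [not_nonempty_iff_eq_empty] at hne
              rw [hne, edgesIn_card_le_one pY EY hnoloop (by simp), Finset.sum_empty]
          exact hcontra z hz0 (fun e he => edgesIn_subset pY EY S₂ (hzsupp e he)) htight
            (fun _ => hk2)
      · -- there are two distinct minimal tight sets, both bad
        push_neg at huniq
        obtain ⟨S', hS'F, hS'min, hS'ne⟩ := huniq
        obtain ⟨hSE2', hSEZ1'⟩ := hbad S' hS'F hS'min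
        -- extract the two edges of E(S)
        obtain ⟨a, ha⟩ := card_eq_one.mp hSEZ1
        have haEZ : a ∈ EZ := by
          have : a ∈ EZ ∩ edgesIn pY EY S := by rw [ha]; exact mem_singleton_self a
          exact (mem_inter.mp this).1
        have haES : a ∈ edgesIn pY EY S := by
          have : a ∈ EZ ∩ edgesIn pY EY S := by rw [ha]; exact mem_singleton_self a
          exact (mem_inter.mp this).2
        obtain ⟨b, hb⟩ := card_eq_one.mp (by
          rw [card_erase_of_mem haES, hSE2] : ((edgesIn pY EY S).erase a).card = 1)
        have hbES : b ∈ edgesIn pY EY S := by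
          have : b ∈ (edgesIn pY EY S).erase a := by rw [hb]; exact mem_singleton_self b
          exact mem_of_mem_erase this
        have hba : b ≠ a := by
          have : b ∈ (edgesIn pY EY S).erase a := by rw [hb]; exact mem_singleton_self b
          exact ne_of_mem_erase this
        have hESab : edgesIn pY EY S = {a, b} := by
          rw [← insert_erase haES, hb]
        have hbEZ : b ∉ EZ := by
          intro hbEZ'
          have : b ∈ EZ ∩ edgesIn pY EY S := mem_inter.mpr ⟨hbEZ', hbES⟩
          rw [ha, mem_singleton] at this
          exact hba this
        -- extract the two edges of E(S')
        obtain ⟨a', ha'⟩ := card_eq_one.mp hSEZ1'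
        have haEZ' : a' ∈ EZ := by
          have : a' ∈ EZ ∩ edgesIn pY EY S' := by rw [ha']; exact mem_singleton_self a'
          exact (mem_inter.mp this).1
        have haES' : a' ∈ edgesIn pY EY S' := by
          have : a' ∈ EZ ∩ edgesIn pY EY S' := by rw [ha']; exact mem_singleton_self a'
          exact (mem_inter.mp this).2
        obtain ⟨b', hb'⟩ := card_eq_one.mp (by
          rw [card_erase_of_mem haES', hSE2'] : ((edgesIn pY EY S').erase a').card = 1)
        have hbES' : b' ∈ edgesIn pY EY S' := by
          have : b' ∈ (edgesIn pY EY S').erase a' := by rw [hb']; exact mem_singleton_self b'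
          exact mem_of_mem_erase this
        have hba' : b' ≠ a' := by
          have : b' ∈ (edgesIn pY EY S').erase a' := by rw [hb']; exact mem_singleton_self b'
          exact ne_of_mem_erase this
        have hESab' : edgesIn pY EY S' = {a', b'} := by
          rw [← insert_erase haES', hb']
        have hbEZ' : b' ∉ EZ := by
          intro hbEZ''
          have : b' ∈ EZ ∩ edgesIn pY EY S' := mem_inter.mpr ⟨hbEZ'', hbES'⟩
          rw [ha', mem_singleton] at this
          exact hba' this
        -- E(S) and E(S') are disjoint
        have hdisjE : edgesIn pY EY S ∩ edgesIn pY EY S' = ∅ := by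
          have hS'T : TightSet pY EY y S' := ((mem_filter.mp hS'F).2).1
          rcases hminclass S' hS'F hS'min S hST with h | h
          · rw [edgesIn_inter]
            exact edgesIn_card_le_one pY EY hnoloop h
          · exfalso
            have : S' ⊂ S ∨ S' = S := by
              rcases eq_or_ne S' S with h' | h'
              · exact Or.inr h'
              · exact Or.inl (Finset.ssubset_iff_subset_ne.mpr ⟨h, h'⟩)
            rcases this with h' | h'
            · exact hSmin S' hS'F (lt_iff_ssubset.mpr h')
            · exact hS'ne h'
        -- pairwise distinctness
        have hdistinct : a ≠ a' ∧ a ≠ b' ∧ b ≠ a' ∧ b ≠ b' := by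
          refine ⟨?_, ?_, ?_, ?_⟩ <;> intro h
          · have : a ∈ edgesIn pY EY S ∩ edgesIn pY EY S' :=
              mem_inter.mpr ⟨haES, h ▸ haES'⟩
            rw [hdisjE] at this; exact notMem_empty _ this
          · have : a ∈ edgesIn pY EY S ∩ edgesIn pY EY S' :=
              mem_inter.mpr ⟨haES, h ▸ hbES'⟩
            rw [hdisjE] at this; exact notMem_empty _ this
          · have : b ∈ edgesIn pY EY S ∩ edgesIn pY EY S' :=
              mem_inter.mpr ⟨hbES, h ▸ haES'⟩
            rw [hdisjE] at this; exact notMem_empty _ this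
          · have : b ∈ edgesIn pY EY S ∩ edgesIn pY EY S' :=
              mem_inter.mpr ⟨hbES, h ▸ hbES'⟩
            rw [hdisjE] at this; exact notMem_empty _ this
        obtain ⟨haa', hab', hba'', hbb'⟩ := hdistinct
        set z : ε → ℝ := fun e =>
          if e = a then 1 else if e = b then (-1) else if e = a' then (-1)
          else if e = b' then 1 else 0 with hzdef
        have hza : z a = 1 := by rw [hzdef]; simp
        have hzb : z b = -1 := by rw [hzdef]; simp [hba]
        have hza' : z a' = -1 := by rw [hzdef]; simp [haa'.symm, hba''.symm]
        have hzb' : z b' = 1 := by rw [hzdef]; simp [hab'.symm, hbb'.symm, hba']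
        have hzsupp4 : ∀ e, z e ≠ 0 → e ∈ ({a, b, a', b'} : Finset ε) := by
          intro e he
          rw [hzdef] at he
          simp only [mem_insert, mem_singleton]
          by_contra h
          push_neg at h
          obtain ⟨h1, h2, h3, h4⟩ := h
          simp [h1, h2, h3, h4] at he
        have hzsuppU : ∀ e, z e ≠ 0 → e ∈ edgesIn pY EY S ∪ edgesIn pY EY S' := by
          intro e he
          rcases mem_insert.mp (hzsupp4 e he) with h | h
          · exact mem_union_left _ (h ▸ haES)
          rcases mem_insert.mp h with h | h
          · exact mem_union_left _ (h ▸ hbES)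
          rcases mem_insert.mp h with h | h
          · exact mem_union_right _ (h ▸ haES')
          · rw [mem_singleton] at h
            exact mem_union_right _ (h ▸ hbES')
        have hsumS : ∑ e ∈ edgesIn pY EY S, z e = 0 := by
          rw [hESab, sum_pair hba.symm, hza, hzb]; ring
        have hsumS' : ∑ e ∈ edgesIn pY EY S', z e = 0 := by
          rw [hESab', sum_pair hba'.symm, hza', hzb']; ring
        have htight : ∀ U : Finset V, U.Nonempty →
            ∑ e ∈ edgesIn pY EY U, y e = (U.card : ℝ) - 1 →
            ∑ e ∈ edgesIn pY EY U, z e = 0 := by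
          intro U hUne hUt
          rw [hsumsupp z _ hzsuppU (edgesIn pY EY U)]
          rw [inter_union_distrib_left]
          rw [Finset.sum_union (by
            rw [Finset.disjoint_left]
            intro e h1 h2
            have : e ∈ edgesIn pY EY S ∩ edgesIn pY EY S' :=
              mem_inter.mpr ⟨(mem_inter.mp h1).2, (mem_inter.mp h2).2⟩
            rw [hdisjE] at this
            exact notMem_empty _ this)]
          have hpart : ∀ (S₀ : Finset V), S₀ ∈ F → (∀ X ∈ F, ¬ X < S₀) →
              ∑ e ∈ edgesIn pY EY S₀, z e = 0 →
              ∑ e ∈ edgesIn pY EY U ∩ edgesIn pY EY S₀, z e = 0 := by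
            intro S₀ h1 h2' h3
            rcases hminclass S₀ h1 h2' U ⟨hUne, hUt⟩ with h | h
            · rw [edgesIn_inter, edgesIn_card_le_one pY EY hnoloop h, Finset.sum_empty]
            · rw [inter_eq_right.mpr (edgesIn_mono pY EY h)]
              exact h3
          rw [hpart S hSF hSmin hsumS, hpart S' hS'F hS'min hsumS']
          ring
        have hzEZsum : ∑ e ∈ EZ, z e = 0 := by
          rw [hsumsupp z _ hzsupp4 EZ]
          have : EZ ∩ ({a, b, a', b'} : Finset ε) = {a, a'} := by
            ext e
            simp only [mem_inter, mem_insert, mem_singleton]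
            constructor
            · rintro ⟨heEZ, h | h | h | h⟩
              · exact Or.inl h
              · exact absurd (h ▸ heEZ) hbEZ
              · exact Or.inr h
              · exact absurd (h ▸ heEZ) hbEZ'
            · rintro (h | h)
              · exact ⟨h ▸ haEZ, Or.inl h⟩
              · exact ⟨h ▸ haEZ', Or.inr (Or.inr (Or.inl h))⟩
          rw [this, sum_pair haa', hza, hza']
          ring
        have hz0 : z ≠ 0 := by
          intro h
          have := congrFun h a
          rw [hza] at this
          norm_num at this
        exact hcontra z hz0
          (fun e he => by
            rcases mem_union.mp (hzsuppU e he) with h | h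
            · exact edgesIn_subset pY EY S h
            · exact edgesIn_subset pY EY S' h)
          htight (fun _ => hzEZsum)
    · -- some minimal tight set is "good"
      push_neg at hbad
      obtain ⟨S₀, hS₀F, hS₀min, hgood⟩ := hbad
      have hS₀T : TightSet pY EY y S₀ := ((mem_filter.mp hS₀F).2).1
      have hS₀2 : 2 ≤ S₀.card := ((mem_filter.mp hS₀F).2).2
      have hcE : 2 ≤ (edgesIn pY EY S₀).card := le_trans hS₀2 (hEcard S₀ hS₀T hS₀2)
      by_cases h3 : 3 ≤ (edgesIn pY EY S₀).card
      · -- at least 3 edges: kill both functionals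
        obtain ⟨z, hz0, hzsupp, hzker⟩ := exists_ne_zero_in_ker (edgesIn pY EY S₀) 2
          (by omega) ![fun _ => 1, fun e => if e ∈ EZ then (1:ℝ) else 0]
        have hk0 : ∑ e ∈ edgesIn pY EY S₀, z e = 0 := by
          have := hzker 0; simpa using this
        have hk1 : ∑ e ∈ EZ, z e = 0 := by
          have := hzker 1
          rw [show (![fun _ => (1:ℝ), fun e => if e ∈ EZ then (1:ℝ) else 0] : Fin 2 → ε → ℝ) 1
            = fun e => if e ∈ EZ then (1:ℝ) else 0 from rfl] at this
          rw [hitesum z _ _] at this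
          rw [hsumsupp z _ hzsupp EZ, inter_comm]
          exact this
        exact hcontra z hz0 (fun e he => edgesIn_subset pY EY S₀ (hzsupp e he))
          (hdir S₀ hS₀F hS₀min z hzsupp hk0) (fun _ => hk1)
      · -- exactly 2 edges, and EZ meets them in 0 or 2 edges
        have hc2 : (edgesIn pY EY S₀).card = 2 := by omega
        have hEZc' : (EZ ∩ edgesIn pY EY S₀).card ≠ 1 := hgood hc2
        obtain ⟨z, hz0, hzsupp, hzker⟩ := exists_ne_zero_in_ker (edgesIn pY EY S₀) 1
          (by omega) ![fun _ => 1]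
        have hk0 : ∑ e ∈ edgesIn pY EY S₀, z e = 0 := by
          have := hzker 0; simpa using this
        have hk1 : ∑ e ∈ EZ, z e = 0 := by
          rw [hsumsupp z _ hzsupp EZ]
          have hle2 : (EZ ∩ edgesIn pY EY S₀).card ≤ 2 := by
            calc (EZ ∩ edgesIn pY EY S₀).card ≤ (edgesIn pY EY S₀).card :=
                card_le_card inter_subset_right
              _ = 2 := hc2
          by_cases h0 : (EZ ∩ edgesIn pY EY S₀).card = 0
          · rw [card_eq_zero.mp h0, Finset.sum_empty]
          · have h2' : (EZ ∩ edgesIn pY EY S₀).card = 2 := by omega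
            have : EZ ∩ edgesIn pY EY S₀ = edgesIn pY EY S₀ := by
              apply eq_of_subset_of_card_le inter_subset_right
              omega
            rw [this]
            exact hk0
        exact hcontra z hz0 (fun e he => edgesIn_subset pY EY S₀ (hzsupp e he))
          (hdir S₀ hS₀F hS₀min z hzsupp hk0) (fun _ => hk1)
  · -- the EZ constraint is not tight: one functional suffices
    obtain ⟨z, hz0, hzsupp, hzker⟩ := exists_ne_zero_in_ker (edgesIn pY EY S) 1
      (by omega) ![fun _ => 1]
    have hk0 : ∑ e ∈ edgesIn pY EY S, z e = 0 := by
      have := hzker 0; simpa using this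
    exact hcontra z hz0 (fun e he => edgesIn_subset pY EY S (hzsupp e he))
      (hdir S hSF hSmin z hzsupp hk0) (fun h => absurd h hEZt)
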